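/- arXiv:0808.0487 — 2 statements merged into one kernel-verified Lean document; each statement's English description precedes it below -/
import Mathlib

section
/- For every x ∈ [0,1) and all k, l ∈ ℕ, wal_k(x) · conj(wal_l(x)) = wal_{k ⊖ l}(x), where k ⊖ l denotes digitwise subtraction of base-p digits modulo p. -/
open scoped BigOperators

/-- `ω_p = exp(2πi/p)`. -/
noncomputable def omega (p : ℕ) : ℂ := Complex.exp (2 * Real.pi * Complex.I / p)

/-- The `i`-th base-`p` digit of the natural number `n` (starting from `i = 0`). -/
def ndigit (p n i : ℕ) : ℕ := (n / p ^ i) % p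

/-- The `i`-th base-`p` digit of the real number `x` (starting from `i = 1`):
`x_i = ⌊p^i x⌋ mod p`. -/
noncomputable def xdigit (p : ℕ) (x : ℝ) (i : ℕ) : ℕ := (⌊(p : ℝ) ^ i * x⌋).toNat % p

/-- The base-`p` Walsh function `wal_k(x) = ω_p^{x_1 k_0 + x_2 k_1 + ⋯}`
(the digits of `k` vanish beyond index `k`, so the sum below is the full series). -/
noncomputable def wal (p k : ℕ) (x : ℝ) : ℂ :=
  omega p ^ (∑ i ∈ Finset.range (k + 1), xdigit p x (i + 1) * ndigit p k i)

/-- Multivariate Walsh function `wal_k(x) = ∏_j wal_{k_j}(x_j)`. -/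
noncomputable def walS (p s : ℕ) (k : Fin s → ℕ) (x : Fin s → ℝ) : ℂ :=
  ∏ j, wal p (k j) (x j)

/-- The vector of the first `m` base-`p` digits of `n`, viewed in `ℤ_p^m`. -/
def nvec (p m : ℕ) (n : ℕ) : Fin m → ZMod p := fun i => (ndigit p n i : ZMod p)

/-- The `n`-th point of the digital net generated by matrices `C = (C_1,…,C_s)`:
`x_{j,n} = Σ_{i=1}^m y_{j,n,i} p^{-i}` where `y⃗_{j,n} = C_j n⃗`. -/
noncomputable def netPoint (p s m : ℕ) (C : Fin s → Matrix (Fin m) (Fin m) (ZMod p)) (n : ℕ) :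
    Fin s → ℝ :=
  fun j => ∑ i : Fin m, ((Matrix.mulVec (C j) (nvec p m n)) i).val / (p : ℝ) ^ (i.val + 1)

/-- `C·k = C_1ᵀ k⃗_1^{(m)} + ⋯ + C_sᵀ k⃗_s^{(m)} ∈ ℤ_p^m`. -/
def Cdot (p s m : ℕ) (C : Fin s → Matrix (Fin m) (Fin m) (ZMod p)) (k : Fin s → ℕ) :
    Fin m → ZMod p :=
  ∑ j, Matrix.mulVec (Matrix.transpose (C j)) (nvec p m (k j))

/-- Digitwise addition modulo `p` of base-`p` digits: `k ⊕ l`. -/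
def dadd (p k l : ℕ) : ℕ :=
  ∑ i ∈ Finset.range (k + l + 1), ((ndigit p k i + ndigit p l i) % p) * p ^ i

/-- Digitwise subtraction modulo `p` of base-`p` digits: `k ⊖ l`. -/
def dsub (p k l : ℕ) : ℕ :=
  ∑ i ∈ Finset.range (k + l + 1), ((ndigit p k i + (p - ndigit p l i)) % p) * p ^ i

lemma omega_pow_p {p : ℕ} (hp : p ≠ 0) : omega p ^ p = 1 := by
  rw [omega, ← Complex.exp_nat_mul]
  have h : (p : ℂ) * (2 * Real.pi * Complex.I / p) = 2 * Real.pi * Complex.I := by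
    have : (p : ℂ) ≠ 0 := Nat.cast_ne_zero.2 hp
    field_simp
  rw [h, Complex.exp_two_pi_mul_I]

lemma omega_pow_congr {p : ℕ} (hp : p ≠ 0) {a b : ℕ} (h : (a : ZMod p) = b) :
    omega p ^ a = omega p ^ b := by
  haveI : NeZero p := ⟨hp⟩
  have hm : a % p = b % p := by rwa [ZMod.natCast_eq_natCast_iff, Nat.ModEq] at h
  have key : ∀ c : ℕ, omega p ^ c = omega p ^ (c % p) := by
    intro c
    conv_lhs => rw [← Nat.div_add_mod c p]
    rw [pow_add, pow_mul, omega_pow_p hp, one_pow, one_mul]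
  rw [key a, key b, hm]

lemma conj_omega (p : ℕ) : (starRingEnd ℂ) (omega p) = (omega p)⁻¹ := by
  rw [omega, ← Complex.exp_conj, ← Complex.exp_neg]
  congr 1
  simp [map_div₀, Complex.conj_I, map_ofNat]
  ring

lemma omega_inv {p : ℕ} (hp : p ≠ 0) : (omega p)⁻¹ = omega p ^ (p - 1) := by
  refine inv_eq_of_mul_eq_one_right ?_
  rw [← pow_succ', show p - 1 + 1 = p by omega, omega_pow_p hp]

lemma ndigit_eq_zero {p n i : ℕ} (hp : 2 ≤ p) (h : n + 1 ≤ i) : ndigit p n i = 0 := by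
  have h1 : n < p ^ i :=
    lt_of_lt_of_le (Nat.lt_two_pow_self (n := n))
      (le_trans (Nat.pow_le_pow_right (by omega) (by omega)) (Nat.pow_le_pow_left hp i))
  simp [ndigit, Nat.div_eq_of_lt h1]

lemma sum_digits_lt (p : ℕ) (c : ℕ → ℕ) (hc : ∀ i, c i < p) (N : ℕ) :
    ∑ i ∈ Finset.range N, c i * p ^ i < p ^ N := by
  induction N with
  | zero => simp
  | succ N ih =>
    rw [Finset.sum_range_succ]
    calc _ < p ^ N + c N * p ^ N := Nat.add_lt_add_right ih _
    _ = (c N + 1) * p ^ N := by ring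
    _ ≤ p * p ^ N := Nat.mul_le_mul_right _ (hc N)
    _ = p ^ (N + 1) := by ring

lemma digit_sum (p : ℕ) (hp : 0 < p) (c : ℕ → ℕ) (hc : ∀ i, c i < p) (N j : ℕ) :
    ndigit p (∑ i ∈ Finset.range N, c i * p ^ i) j = if j < N then c j else 0 := by
  induction N with
  | zero => simp [ndigit]
  | succ N ih =>
    rw [Finset.sum_range_succ]
    rcases lt_trichotomy j N with h | h | h
    · rw [if_pos (by omega)]
      rw [if_pos h] at ih
      rw [ndigit] at ih ⊢
      have hdvd : c N * p ^ N = ((c N * p ^ (N - j - 1)) * p) * p ^ j := by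
        rw [mul_assoc, mul_assoc, ← pow_succ', ← pow_add]
        congr 2
        omega
      rw [hdvd, Nat.add_mul_div_right _ _ (Nat.pow_pos (n := j) hp),
        Nat.add_mul_mod_self_right, ih]
    · subst h
      rw [if_pos (by omega), ndigit,
        show c j * p ^ j = c j * p ^ j from rfl,
        Nat.add_mul_div_right _ _ (Nat.pow_pos (n := j) hp),
        Nat.div_eq_of_lt (sum_digits_lt p c hc j), zero_add, Nat.mod_eq_of_lt (hc j)]
    · rw [if_neg (by omega), ndigit, Nat.div_eq_of_lt, Nat.zero_mod]
      calc _ < p ^ (N + 1) := by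
              have := sum_digits_lt p c hc (N + 1)
              rwa [Finset.sum_range_succ] at this
      _ ≤ p ^ j := Nat.pow_le_pow_right hp (by omega)

lemma wal_ext (p : ℕ) (hp : 2 ≤ p) (x : ℝ) (n M : ℕ) (h : n + 1 ≤ M) :
    wal p n x = omega p ^ (∑ i ∈ Finset.range M, xdigit p x (i + 1) * ndigit p n i) := by
  rw [wal]
  congr 1
  refine Finset.sum_subset (Finset.range_subset_range.2 h) ?_
  intro i _ hi
  have : ndigit p n i = 0 := ndigit_eq_zero hp (by simp at hi; omega)
  simp [this]

/-- `wal_k(x) ⋅ conj(wal_l(x)) = wal_{k ⊖ l}(x)`. -/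
theorem statement1 (p : ℕ) (hp : p.Prime) (x : ℝ) (hx0 : 0 ≤ x) (hx1 : x < 1) (k l : ℕ) :
    wal p k x * (starRingEnd ℂ) (wal p l x) = wal p (dsub p k l) x := by
  have hp2 : 2 ≤ p := hp.two_le
  have hp0 : p ≠ 0 := by omega
  set d := dsub p k l with hd
  set M := k + l + d + 2 with hM
  have hld : ∀ i, ndigit p l i < p := fun i => Nat.mod_lt _ (by omega)
  have hdc : ∀ i, (ndigit p k i + (p - ndigit p l i)) % p < p := fun i => Nat.mod_lt _ (by omega)
  have hdig : ∀ i, ndigit p d i =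
      if i < k + l + 1 then (ndigit p k i + (p - ndigit p l i)) % p else 0 := fun i => by
    rw [hd, dsub, digit_sum p (by omega) _ hdc]
  rw [wal_ext p hp2 x k M (by omega), wal_ext p hp2 x l M (by omega),
    wal_ext p hp2 x d M (by omega), map_pow, conj_omega, omega_inv hp0, ← pow_mul, ← pow_add]
  refine omega_pow_congr hp0 ?_
  push_cast [Nat.cast_sub (by omega : 1 ≤ p)]
  rw [ZMod.natCast_self]
  rw [Finset.mul_sum, ← Finset.sum_add_distrib]
  refine Finset.sum_congr rfl ?_
  intro i _
  have hterm : ((ndigit p d i : ℕ) : ZMod p) = (ndigit p k i : ZMod p) - ndigit p l i := by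
    rw [hdig i]
    by_cases hi : i < k + l + 1
    · rw [if_pos hi]
      push_cast [Nat.cast_sub (le_of_lt (hld i)), ZMod.natCast_mod]
      rw [ZMod.natCast_self]
      ring
    · rw [if_neg hi]
      rw [ndigit_eq_zero hp2 (by omega : k + 1 ≤ i), ndigit_eq_zero hp2 (by omega : l + 1 ≤ i)]
      simp
  rw [hterm]
  ring
end

section
/- (Closed form of the kernel R'.) Let α > 1 be real and R̂'(k) = ((p^α − p)/(p^α(p−1)))² · p^{−2α·⌊log_p k⌋} for k ≥ 1. Let z ∈ (0,1) with base-p digits z_j = ⌊p^j z⌋ mod p, and suppose i ≥ 1 is such that z_j = 0 for all 1 ≤ j < i and z_i ≠ 0. Then Σ_{k=1}^∞ R̂'(k) wal_k(z) = ((p^α − p)² / ((p−1)(p^{2α} − p))) · (1 − p^{i(1−2α)} (p^{2α} − 1)/(p − 1)). -/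
open scoped BigOperators

lemma st16_ndigit_eq_zero {p k i : ℕ} (h : k < p ^ i) : ndigit p k i = 0 := by
  simp [ndigit, Nat.div_eq_of_lt h]

lemma st16_sum_digit_ext {p : ℕ} (hp : 2 ≤ p) (z : ℝ) (k : ℕ) {m M : ℕ}
    (hm : k < p ^ m) (hM : m ≤ M) :
    ∑ j ∈ Finset.range M, xdigit p z (j + 1) * ndigit p k j
      = ∑ j ∈ Finset.range m, xdigit p z (j + 1) * ndigit p k j := by
  refine (Finset.sum_subset (Finset.range_subset_range.2 hM) ?_).symm
  intro j hj hjm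
  have hmj : m ≤ j := by
    simp only [Finset.mem_range, not_lt] at hjm
    exact hjm
  have hkj : k < p ^ j := lt_of_lt_of_le hm (Nat.pow_le_pow_right (by omega) hmj)
  rw [st16_ndigit_eq_zero hkj, mul_zero]

lemma st16_wal_eq {p : ℕ} (hp : 2 ≤ p) {k n : ℕ} (h : k < p ^ n) (z : ℝ) :
    wal p k z = omega p ^ (∑ j ∈ Finset.range n, xdigit p z (j + 1) * ndigit p k j) := by
  have h1 : k < p ^ (k + 1) := lt_trans (Nat.lt_succ_self k) (Nat.lt_pow_self (a := p) (n := k + 1) (by omega))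
  rw [wal, ← st16_sum_digit_ext hp z k h1 (le_max_right n (k + 1)),
    ← st16_sum_digit_ext hp z k h (le_max_left n (k + 1))]

lemma st16_sum_omega_pow {p : ℕ} (hp : 2 ≤ p) (n : ℕ) (c : ℕ → ℕ) :
    ∑ k ∈ Finset.range (p ^ n), omega p ^ (∑ j ∈ Finset.range n, c j * ndigit p k j)
      = ∏ j ∈ Finset.range n, ∑ d ∈ Finset.range p, omega p ^ (c j * d) := by
  induction n generalizing c with
  | zero => simp
  | succ n ih =>
    have hp0 : 0 < p := by omega
    have key : ∑ k ∈ Finset.range (p ^ (n + 1)),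
          omega p ^ (∑ j ∈ Finset.range (n + 1), c j * ndigit p k j)
        = ∑ x ∈ Finset.range p ×ˢ Finset.range (p ^ n),
            omega p ^ (∑ j ∈ Finset.range (n + 1), c j * ndigit p (x.1 + p * x.2) j) := by
      refine Finset.sum_nbij' (fun k => (k % p, k / p)) (fun x => x.1 + p * x.2) ?_ ?_ ?_ ?_ ?_
      · intro k hk
        simp only [Finset.mem_range, Finset.mem_product] at *
        constructor
        · exact Nat.mod_lt _ hp0
        · rw [pow_succ'] at hk
          exact Nat.div_lt_of_lt_mul hk
      · intro x hx
        simp only [Finset.mem_range, Finset.mem_product] at *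
        rw [pow_succ']
        calc x.1 + p * x.2 < p + p * x.2 := by omega
          _ = p * (x.2 + 1) := by ring
          _ ≤ p * p ^ n := Nat.mul_le_mul_left p (by omega)
      · intro k _
        simp [Nat.mod_add_div]
      · intro x hx
        simp only [Finset.mem_range, Finset.mem_product] at hx
        have h1 : (x.1 + p * x.2) % p = x.1 := by
          rw [Nat.add_mul_mod_self_left, Nat.mod_eq_of_lt hx.1]
        have h2 : (x.1 + p * x.2) / p = x.2 := by
          rw [Nat.add_mul_div_left _ _ hp0, Nat.div_eq_of_lt hx.1, zero_add]
        simp [h1, h2]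
      · intro k _
        rw [Nat.mod_add_div]
    rw [key, Finset.sum_product]
    have hd0 : ∀ d m : ℕ, d < p → ndigit p (d + p * m) 0 = d := by
      intro d m hd
      simp only [ndigit, pow_zero, Nat.div_one]
      rw [Nat.add_mul_mod_self_left, Nat.mod_eq_of_lt hd]
    have hdS : ∀ d m j : ℕ, d < p → ndigit p (d + p * m) (j + 1) = ndigit p m j := by
      intro d m j hd
      simp only [ndigit, pow_succ', ← Nat.div_div_eq_div_mul]
      rw [Nat.add_mul_div_left _ _ hp0, Nat.div_eq_of_lt hd, zero_add]
    have hexp : ∀ d ∈ Finset.range p, ∀ m ∈ Finset.range (p ^ n),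
        (∑ j ∈ Finset.range (n + 1), c j * ndigit p (d + p * m) j)
          = c 0 * d + ∑ j ∈ Finset.range n, c (j + 1) * ndigit p m j := by
      intro d hd m hm
      simp only [Finset.mem_range] at hd hm
      rw [Finset.sum_range_succ']
      rw [hd0 d m hd]
      rw [add_comm]
      congr 1
      exact Finset.sum_congr rfl fun j _ => by rw [hdS d m j hd]
    calc ∑ d ∈ Finset.range p, ∑ m ∈ Finset.range (p ^ n),
          omega p ^ (∑ j ∈ Finset.range (n + 1), c j * ndigit p (d + p * m) j)
        = ∑ d ∈ Finset.range p, ∑ m ∈ Finset.range (p ^ n),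
            omega p ^ (c 0 * d) * omega p ^ (∑ j ∈ Finset.range n, c (j + 1) * ndigit p m j) := by
          refine Finset.sum_congr rfl fun d hd => Finset.sum_congr rfl fun m hm => ?_
          rw [hexp d hd m hm, pow_add]
      _ = (∑ d ∈ Finset.range p, omega p ^ (c 0 * d)) *
            (∑ m ∈ Finset.range (p ^ n),
              omega p ^ (∑ j ∈ Finset.range n, c (j + 1) * ndigit p m j)) := by
          rw [Finset.sum_mul_sum]
      _ = ∏ j ∈ Finset.range (n + 1), ∑ d ∈ Finset.range p, omega p ^ (c j * d) := by
          rw [ih (fun j => c (j + 1)), Finset.prod_range_succ', mul_comm]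

lemma st16_omega_pow_ne_one {p : ℕ} (hp : p.Prime) {c : ℕ} (hc0 : c ≠ 0) (hc : c < p) :
    omega p ^ c ≠ 1 := by
  have hp0 : (p : ℂ) ≠ 0 := Nat.cast_ne_zero.2 hp.pos.ne'
  rw [omega, ← Complex.exp_nat_mul]
  intro h
  rw [Complex.exp_eq_one_iff] at h
  obtain ⟨m, hm⟩ := h
  have h2 : ((c : ℂ)) * (2 * Real.pi * Complex.I)
      = ((m : ℂ) * p) * (2 * Real.pi * Complex.I) := by
    calc (c : ℂ) * (2 * Real.pi * Complex.I)
        = ((c : ℂ) * (2 * Real.pi * Complex.I / p)) * p := by field_simp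
      _ = ((m : ℂ) * (2 * Real.pi * Complex.I)) * p := by rw [hm]
      _ = ((m : ℂ) * p) * (2 * Real.pi * Complex.I) := by ring
  have h3 : (c : ℂ) = (m : ℂ) * p := mul_right_cancel₀ Complex.two_pi_I_ne_zero h2
  have h4 : (c : ℤ) = m * p := by exact_mod_cast h3
  have h5 : (p : ℤ) ∣ (c : ℤ) := ⟨m, by rw [h4]; ring⟩
  have h6 : (p : ℤ) ≤ (c : ℤ) := Int.le_of_dvd (by exact_mod_cast Nat.pos_of_ne_zero hc0) h5
  omega

lemma st16_omega_pow_pow {p : ℕ} (hp : p.Prime) (c : ℕ) : (omega p ^ c) ^ p = 1 := by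
  have hp0 : (p : ℂ) ≠ 0 := Nat.cast_ne_zero.2 hp.pos.ne'
  rw [← pow_mul, omega, ← Complex.exp_nat_mul]
  have : ((c * p : ℕ) : ℂ) * (2 * Real.pi * Complex.I / p)
      = (c : ℕ) * (2 * Real.pi * Complex.I) := by
    push_cast
    field_simp
  rw [this, Complex.exp_nat_mul, Complex.exp_two_pi_mul_I, one_pow]

lemma st16_sum_omega_geo {p : ℕ} (hp : p.Prime) {c : ℕ} (hc : c < p) :
    ∑ d ∈ Finset.range p, omega p ^ (c * d) = if c = 0 then (p : ℂ) else 0 := by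
  rcases eq_or_ne c 0 with rfl | hc0
  · simp
  · rw [if_neg hc0]
    have h1 : omega p ^ c ≠ 1 := st16_omega_pow_ne_one hp hc0 hc
    have h2 : ∀ d, omega p ^ (c * d) = (omega p ^ c) ^ d := fun d => by rw [← pow_mul]
    simp_rw [h2]
    rw [geom_sum_eq h1, st16_omega_pow_pow hp c]
    simp

lemma st16_xdigit_lt {p : ℕ} (hp : 0 < p) (z : ℝ) (j : ℕ) : xdigit p z j < p :=
  Nat.mod_lt _ hp

lemma st16_T_eval {p : ℕ} (hp : p.Prime) (z : ℝ) (n : ℕ) :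
    ∑ k ∈ Finset.range (p ^ n), wal p k z
      = ∏ j ∈ Finset.range n, (if xdigit p z (j + 1) = 0 then (p : ℂ) else 0) := by
  have h1 : ∀ k ∈ Finset.range (p ^ n),
      wal p k z = omega p ^ (∑ j ∈ Finset.range n, xdigit p z (j + 1) * ndigit p k j) := by
    intro k hk
    exact st16_wal_eq hp.two_le (Finset.mem_range.1 hk) z
  rw [Finset.sum_congr rfl h1, st16_sum_omega_pow hp.two_le]
  exact Finset.prod_congr rfl fun j _ =>
    st16_sum_omega_geo hp (st16_xdigit_lt hp.pos z (j + 1))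

set_option maxHeartbeats 2000000 in
/-- closed form of the kernel `R'`:
`Σ_{k≥1} R̂'(k) wal_k(z) = ((p^α−p)²/((p−1)(p^{2α}−p)))(1 − p^{i(1−2α)}(p^{2α}−1)/(p−1))`
when the first nonzero base-`p` digit of `z` is the `i`-th one. -/
theorem statement16 (p : ℕ) (hp : p.Prime) (α : ℝ) (hα : 1 < α)
    (z : ℝ) (hz0 : 0 < z) (hz1 : z < 1) (i : ℕ) (hi : 1 ≤ i)
    (hzj : ∀ j : ℕ, 1 ≤ j → j < i → xdigit p z j = 0) (hzi : xdigit p z i ≠ 0) :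
    ∑' k : ℕ, (Complex.ofReal
          ((((p : ℝ) ^ α - p) / ((p : ℝ) ^ α * ((p : ℝ) - 1))) ^ 2 *
            (p : ℝ) ^ (-(2 * α * (Nat.log p (k + 1) : ℝ)))) * wal p (k + 1) z) =
      Complex.ofReal
        (((p : ℝ) ^ α - p) ^ 2 / (((p : ℝ) - 1) * ((p : ℝ) ^ (2 * α) - p)) *
          (1 - (p : ℝ) ^ ((i : ℝ) * (1 - 2 * α)) * ((p : ℝ) ^ (2 * α) - 1) / ((p : ℝ) - 1))) := by
  obtain ⟨b, rfl⟩ : ∃ b, i = b + 1 := ⟨i - 1, (Nat.succ_pred_eq_of_pos hi).symm⟩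
  have hp2 : 2 ≤ p := hp.two_le
  have hp1R : (1:ℝ) < p := by exact_mod_cast hp.one_lt
  have hp0R : (0:ℝ) < p := by linarith
  set P : ℝ := (p:ℝ) ^ α with hPdef
  set W : ℝ := (p:ℝ) ^ (2*α) with hWdef
  set u : ℝ := (p:ℝ) ^ (-(2*α)) with hudef
  set Q : ℝ := p * u with hQdef
  set cc : ℝ := ((P - p) / (P * ((p:ℝ) - 1))) ^ 2 with hccdef
  have hP_pos : 0 < P := Real.rpow_pos_of_pos hp0R _
  have hW_pos : 0 < W := Real.rpow_pos_of_pos hp0R _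
  have hu_pos : 0 < u := Real.rpow_pos_of_pos hp0R _
  have hcc_nonneg : 0 ≤ cc := sq_nonneg _
  have huW : u * W = 1 := by
    rw [hudef, hWdef, ← Real.rpow_add hp0R]; norm_num
  have hWP : W = P ^ 2 := by
    rw [hWdef, hPdef, ← Real.rpow_natCast ((p:ℝ) ^ α) 2, ← Real.rpow_mul hp0R.le]
    norm_num [mul_comm]
  have hpW : (p:ℝ) < W := by
    rw [hWdef]
    nth_rewrite 1 [← Real.rpow_one (p:ℝ)]
    exact Real.rpow_lt_rpow_of_exponent_lt hp1R (by linarith)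
  have hQW : Q * W = p := by rw [hQdef, mul_assoc, huW, mul_one]
  have hQlt : Q < 1 := by nlinarith
  have hQne : Q ≠ 1 := ne_of_lt hQlt
  have hua : ∀ a : ℕ, (p:ℝ) ^ (-(2 * α * (a:ℝ))) = u ^ a := by
    intro a
    rw [hudef, ← Real.rpow_natCast ((p:ℝ) ^ (-(2*α))) a, ← Real.rpow_mul hp0R.le]
    ring_nf
  -- the summand as a function of the index (shifted by one)
  set f : ℕ → ℂ := fun m => Complex.ofReal (cc * u ^ Nat.log p m) * wal p m z with hfdef
  -- partial sums over p-adic blocks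
  set T : ℕ → ℂ := fun n => ∑ k ∈ Finset.range (p ^ n), wal p k z with hTdef
  have hT : ∀ n, T n = ∏ j ∈ Finset.range n, (if xdigit p z (j + 1) = 0 then (p : ℂ) else 0) :=
    fun n => st16_T_eval hp z n
  have hTsmall : ∀ n, n ≤ b → T n = (p:ℂ) ^ n := by
    intro n hn
    rw [hT]
    have : ∀ j ∈ Finset.range n, (if xdigit p z (j + 1) = 0 then (p : ℂ) else 0) = (p:ℂ) := by
      intro j hj
      rw [if_pos (hzj (j + 1) (by omega) (by simp only [Finset.mem_range] at hj; omega))]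
    rw [Finset.prod_congr rfl this, Finset.prod_const, Finset.card_range]
  have hTbig : ∀ n, b + 1 ≤ n → T n = 0 := by
    intro n hn
    rw [hT]
    exact Finset.prod_eq_zero (Finset.mem_range.2 (by omega)) (if_neg hzi)
  set F : ℕ → ℂ := fun n => ∑ m ∈ Finset.Ico 1 (p ^ n), f m with hFdef
  have hpow1 : ∀ n : ℕ, 1 ≤ p ^ n := fun n => Nat.one_le_pow n p hp.pos
  have hblock : ∀ n, F (n + 1) = F n + Complex.ofReal (cc * u ^ n) * (T (n + 1) - T n) := by
    intro n
    have h1 : p ^ n ≤ p ^ (n + 1) := Nat.pow_le_pow_right hp.pos (by omega)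
    have hsplit := Finset.sum_Ico_consecutive f (hpow1 n) h1
    rw [hFdef]
    simp only
    rw [← hsplit]
    congr 1
    have hlog : ∀ m ∈ Finset.Ico (p ^ n) (p ^ (n + 1)), f m
        = Complex.ofReal (cc * u ^ n) * wal p m z := by
      intro m hm
      rw [Finset.mem_Ico] at hm
      rw [hfdef]
      simp only
      rw [Nat.log_eq_of_pow_le_of_lt_pow hm.1 hm.2]
    rw [Finset.sum_congr rfl hlog, ← Finset.mul_sum, Finset.sum_Ico_eq_sub _ h1]
  have hFsmall : ∀ n, n ≤ b →
      F n = Complex.ofReal (cc * ((p:ℝ) - 1) * ∑ a ∈ Finset.range n, Q ^ a) := by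
    intro n
    induction n with
    | zero => intro _; simp [hFdef]
    | succ n ih =>
      intro hn
      rw [hblock n, ih (by omega), hTsmall n (by omega), hTsmall (n + 1) (by omega)]
      have h2 : (p:ℂ) ^ (n + 1) - (p:ℂ) ^ n = Complex.ofReal ((p:ℝ) ^ (n + 1) - (p:ℝ) ^ n) := by
        push_cast; ring
      rw [h2, ← Complex.ofReal_mul, ← Complex.ofReal_add]
      congr 1
      rw [Finset.sum_range_succ, hQdef]
      ring
  have hFi : F (b + 1)
      = Complex.ofReal (cc * (((p:ℝ) - 1) * ∑ a ∈ Finset.range b, Q ^ a - Q ^ b)) := by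
    rw [hblock b, hFsmall b le_rfl, hTbig (b + 1) le_rfl, hTsmall b le_rfl]
    have h2 : (0:ℂ) - (p:ℂ) ^ b = Complex.ofReal (-((p:ℝ) ^ b)) := by push_cast; ring
    rw [h2, ← Complex.ofReal_mul, ← Complex.ofReal_add]
    congr 1
    rw [hQdef]
    ring
  have hFconst : ∀ n, b + 1 ≤ n → F n = F (b + 1) := by
    intro n
    induction n with
    | zero => omega
    | succ n ih =>
      intro hn
      rcases eq_or_lt_of_le hn with h | h
      · rw [← h]
      · have hbn : b + 1 ≤ n := by omega
        rw [hblock n, ih hbn, hTbig n (by omega), hTbig (n + 1) (by omega)]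
        simp
  -- norm of wal is 1
  have homega : ‖omega p‖ = 1 := by
    rw [omega, show (2 * (Real.pi:ℂ) * Complex.I / (p:ℂ))
        = ((2 * Real.pi / p : ℝ) : ℂ) * Complex.I by push_cast; ring]
    exact Complex.norm_exp_ofReal_mul_I _
  have hwal1 : ∀ k : ℕ, ‖wal p k z‖ = 1 := by
    intro k
    rw [wal, norm_pow, homega, one_pow]
  -- summability
  have hbound : ∀ k : ℕ, ‖f (k + 1)‖ ≤ cc * W * ((k:ℝ) + 1) ^ (-(2 * α)) := by
    intro k
    rw [hfdef]
    simp only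
    rw [norm_mul, hwal1, mul_one, Complex.norm_real, Real.norm_eq_abs,
      abs_of_nonneg (by positivity)]
    set L := Nat.log p (k + 1) with hL
    have hk1 : (0:ℝ) < (k:ℝ) + 1 := by positivity
    have hL1 : ((k:ℝ) + 1) < (p:ℝ) ^ (L + 1 : ℕ) := by
      have := Nat.lt_pow_succ_log_self hp.one_lt (k + 1)
      exact_mod_cast this
    have e1 : u ^ L = (((p:ℝ) ^ (L:ℕ)) : ℝ) ^ (-(2 * α)) := by
      rw [hudef, ← Real.rpow_natCast ((p:ℝ) ^ (-(2*α))) L, ← Real.rpow_mul hp0R.le,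
        ← Real.rpow_natCast (p:ℝ) L, ← Real.rpow_mul hp0R.le, mul_comm]
    have hplpos : (0:ℝ) < (p:ℝ) ^ (L:ℕ) := by positivity
    have e2 : ((k:ℝ) + 1) / p < (p:ℝ) ^ (L:ℕ) := by
      rw [div_lt_iff₀ hp0R]
      calc (k:ℝ) + 1 < (p:ℝ) ^ (L + 1 : ℕ) := hL1
        _ = (p:ℝ) ^ (L:ℕ) * p := by rw [pow_succ]
    have e3 : (((p:ℝ) ^ (L:ℕ)) : ℝ) ^ (-(2 * α)) ≤ (((k:ℝ) + 1) / p) ^ (-(2 * α)) :=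
      Real.rpow_le_rpow_of_nonpos (by positivity) e2.le (by linarith)
    have hinvu : u⁻¹ = W := inv_eq_of_mul_eq_one_right huW
    have e4 : (((k:ℝ) + 1) / p) ^ (-(2 * α)) = W * ((k:ℝ) + 1) ^ (-(2 * α)) := by
      rw [Real.div_rpow hk1.le hp0R.le, ← hudef, div_eq_mul_inv, hinvu, mul_comm]
    calc cc * u ^ L ≤ cc * ((((k:ℝ) + 1) / p) ^ (-(2 * α))) := by
          rw [e1]; exact mul_le_mul_of_nonneg_left (e3) hcc_nonneg
      _ = cc * W * ((k:ℝ) + 1) ^ (-(2 * α)) := by rw [e4]; ring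
  have hsummable : Summable (fun k : ℕ => f (k + 1)) := by
    apply Summable.of_norm_bounded ?_ hbound
    apply Summable.mul_left
    have h1 : Summable (fun n : ℕ => (n:ℝ) ^ (-(2 * α))) :=
      Real.summable_nat_rpow.2 (by linarith)
    have h2 := (summable_nat_add_iff 1).2 h1
    refine h2.congr fun n => ?_
    push_cast
    ring_nf
  -- identify the tsum with F (b+1)
  have htend1 : Filter.Tendsto (fun N => ∑ k ∈ Finset.range N, f (k + 1))
      Filter.atTop (nhds (∑' k, f (k + 1))) := hsummable.hasSum.tendsto_sum_nat
  have hcomp : Filter.Tendsto (fun n : ℕ => p ^ n - 1) Filter.atTop Filter.atTop := by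
    apply Filter.tendsto_atTop_mono (f := id) (fun n => ?_) Filter.tendsto_id
    have h1 : n < 2 ^ n := Nat.lt_two_pow_self
    have h2 : 2 ^ n ≤ p ^ n := Nat.pow_le_pow_left hp2 n
    simp only [id]
    omega
  have htend2 := htend1.comp hcomp
  have heq : ∀ n : ℕ, ∑ k ∈ Finset.range (p ^ n - 1), f (k + 1) = F n := by
    intro n
    rw [hFdef]
    simp only
    rw [Finset.sum_Ico_eq_sum_range]
    exact Finset.sum_congr rfl fun k _ => by rw [add_comm 1 k]
  have htend3 : Filter.Tendsto (fun n : ℕ => F n) Filter.atTop (nhds (∑' k, f (k + 1))) := by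
    refine htend2.congr fun n => ?_
    simp only [Function.comp]
    exact heq n
  have hconst : Filter.Tendsto (fun n : ℕ => F n) Filter.atTop (nhds (F (b + 1))) := by
    apply Filter.Tendsto.congr' _ tendsto_const_nhds
    filter_upwards [Filter.eventually_ge_atTop (b + 1)] with n hn
    exact (hFconst n hn).symm
  have htsum : (∑' k, f (k + 1)) = F (b + 1) := tendsto_nhds_unique htend3 hconst
  -- rewrite the goal
  have hgoal_lhs : (∑' k : ℕ, (Complex.ofReal
        (cc * (p : ℝ) ^ (-(2 * α * (Nat.log p (k + 1) : ℝ)))) * wal p (k + 1) z))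
      = ∑' k, f (k + 1) := by
    refine tsum_congr fun k => ?_
    rw [hua (Nat.log p (k + 1)), hfdef]
  rw [hgoal_lhs, htsum, hFi]
  -- final real algebra
  congr 1
  have hQpow : (p:ℝ) ^ (((b + 1 : ℕ) : ℝ) * (1 - 2 * α)) = Q ^ (b + 1) := by
    have h1 : Q = (p:ℝ) ^ (1 - 2 * α) := by
      rw [hQdef, hudef]
      nth_rewrite 1 [← Real.rpow_one (p:ℝ)]
      rw [← Real.rpow_add hp0R]
      ring_nf
    rw [h1, ← Real.rpow_natCast ((p:ℝ) ^ (1 - 2*α)) (b + 1), ← Real.rpow_mul hp0R.le, mul_comm]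
  rw [hQpow, geom_sum_eq hQne]
  have hP0 : P ≠ 0 := ne_of_gt hP_pos
  have hp1ne : (p:ℝ) - 1 ≠ 0 := by linarith
  have hQval : Q = (p:ℝ) / P ^ 2 := by
    rw [eq_div_iff (by positivity), ← hWP]
    exact hQW
  rw [hWP] at hpW ⊢
  have hP2pne : P ^ 2 - (p:ℝ) ≠ 0 := by linarith
  have hpP2ne : (p:ℝ) - P ^ 2 ≠ 0 := by linarith
  have hQm1 : Q - 1 = ((p:ℝ) - P ^ 2) / P ^ 2 := by
    rw [hQval]
    field_simp
  rw [pow_succ Q b]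
  set r : ℝ := Q ^ b with hrdef
  rw [hQm1, div_div_eq_mul_div, hQval, hccdef]
  clear_value r cc Q u W P
  field_simp
  ring
end
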